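/- The winning regions of a finite reachability game partition the vertex set: every vertex lies in exactly one of W₀ and W₁ (positional determinacy of reachability games). -/

import Mathlib

/-- A reachability game: a digraph on `V` with Player 0's vertices `V0`
(Player 1 owns the complement), edge relation `E`, and target set `F`.
Player 0 wins a play iff it visits `F`. -/
structure RGame (V : Type*) where
  V0 : Set V
  E : V → V → Prop
  F : Set V

namespace RGame

variable {V : Type*}

/-- `v` has at least one successor. -/
def hasSucc (g : RGame V) (v : V) : Prop := ∃ u, g.E v u

/-- A (possibly finite) play, encoded as `p : ℕ → Option V`: once `none`, always `none`;
the play stops exactly at dead-ends, and consecutive positions are joined by edges. -/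
def IsPlay (g : RGame V) (p : ℕ → Option V) : Prop :=
  ∀ n, (p n = none → p (n + 1) = none) ∧
    ∀ w, p n = some w →
      ((¬g.hasSucc w → p (n + 1) = none) ∧
       (g.hasSucc w → ∃ u, p (n + 1) = some u) ∧
       (∀ u, p (n + 1) = some u → g.E w u))

/-- The history (list of positions) of the play up to and including time `n`. -/
def histUpTo (p : ℕ → Option V) (n : ℕ) : List V :=
  (List.range (n + 1)).filterMap p

/-- Legality of a (history-dependent) strategy: it always chooses an edge-successor
of the current vertex whenever one exists. -/
def LegalStrat (g : RGame V) (σ : V → List V → V) : Prop :=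
  ∀ w h, g.hasSucc w → g.E w (σ w h)

/-- The play `p` is consistent with Player 0 using strategy `σ`. -/
def Cons0 (g : RGame V) (σ : V → List V → V) (p : ℕ → Option V) : Prop :=
  ∀ n w, p n = some w → w ∈ g.V0 → g.hasSucc w → p (n + 1) = some (σ w (histUpTo p n))

/-- The play `p` is consistent with Player 1 using strategy `τ`. -/
def Cons1 (g : RGame V) (τ : V → List V → V) (p : ℕ → Option V) : Prop :=
  ∀ n w, p n = some w → w ∉ g.V0 → g.hasSucc w → p (n + 1) = some (τ w (histUpTo p n))

/-- Legality of a memoryless strategy. -/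
def LegalStratM (g : RGame V) (σ : V → V) : Prop :=
  ∀ w, g.hasSucc w → g.E w (σ w)

/-- Consistency of a play with Player 0 using a memoryless strategy. -/
def Cons0M (g : RGame V) (σ : V → V) (p : ℕ → Option V) : Prop :=
  ∀ n w, p n = some w → w ∈ g.V0 → g.hasSucc w → p (n + 1) = some (σ w)

/-- Consistency of a play with Player 1 using a memoryless strategy. -/
def Cons1M (g : RGame V) (τ : V → V) (p : ℕ → Option V) : Prop :=
  ∀ n w, p n = some w → w ∉ g.V0 → g.hasSucc w → p (n + 1) = some (τ w)

/-- The play visits the target set `F`. -/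
def Visits (g : RGame V) (p : ℕ → Option V) : Prop :=
  ∃ n w, p n = some w ∧ w ∈ g.F

/-- Player 0 has a winning strategy from `v`: some legal strategy forcing every
consistent play starting at `v` to visit `F`. -/
def Win0From (g : RGame V) (v : V) : Prop :=
  ∃ σ : V → List V → V, g.LegalStrat σ ∧
    ∀ p : ℕ → Option V, g.IsPlay p → p 0 = some v → g.Cons0 σ p → g.Visits p

/-- Player 1 has a winning strategy from `v`: some legal strategy such that no
consistent play starting at `v` ever visits `F`. -/
def Win1From (g : RGame V) (v : V) : Prop :=
  ∃ τ : V → List V → V, g.LegalStrat τ ∧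
    ∀ p : ℕ → Option V, g.IsPlay p → p 0 = some v → g.Cons1 τ p → ¬g.Visits p

/-- The attractor sets: `attr 0 = F`, and `attr (n+1)` additionally contains the
Player-0 vertices with some successor in `attr n` and the Player-1 vertices having
a successor and all successors in `attr n`. -/
def attr (g : RGame V) : ℕ → Set V
  | 0 => g.F
  | n + 1 =>
      g.attr n ∪ {v | v ∈ g.V0 ∧ ∃ u, g.E v u ∧ u ∈ g.attr n}
        ∪ {v | v ∉ g.V0 ∧ g.hasSucc v ∧ ∀ u, g.E v u → u ∈ g.attr n}

end RGame

namespace RGame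

variable {V : Type*}

lemma attr_mono (g : RGame V) : Monotone g.attr :=
  monotone_nat_of_le_succ fun n x hx => Or.inl (Or.inl hx)

open Classical in
/-- Player 0's memoryless attractor strategy (with default `d`). -/
noncomputable def sig (g : RGame V) (d : V) (w : V) : V :=
  if h : ∃ u, g.E w u ∧ ∀ m, w ∈ g.attr (m + 1) → u ∈ g.attr m then h.choose
  else if h2 : g.hasSucc w then h2.choose else d

lemma sig_legal (g : RGame V) (d : V) : ∀ w, g.hasSucc w → g.E w (g.sig d w) := by
  intro w hw
  unfold sig
  by_cases h : ∃ u, g.E w u ∧ ∀ m, w ∈ g.attr (m + 1) → u ∈ g.attr m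
  · rw [dif_pos h]; exact h.choose_spec.1
  · rw [dif_neg h, dif_pos hw]; exact hw.choose_spec

open Classical in
/-- Player 1's memoryless trap strategy (with default `d`). -/
noncomputable def tau (g : RGame V) (d : V) (w : V) : V :=
  if h : ∃ u, g.E w u ∧ ∀ n, u ∉ g.attr n then h.choose
  else if h2 : g.hasSucc w then h2.choose else d

lemma tau_legal (g : RGame V) (d : V) : ∀ w, g.hasSucc w → g.E w (g.tau d w) := by
  intro w hw
  unfold tau
  by_cases h : ∃ u, g.E w u ∧ ∀ n, u ∉ g.attr n
  · rw [dif_pos h]; exact h.choose_spec.1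
  · rw [dif_neg h, dif_pos hw]; exact hw.choose_spec

lemma win0_of_attr (g : RGame V) {n : ℕ} {v : V} (hv : v ∈ g.attr n) : g.Win0From v := by
  refine ⟨fun w _ => g.sig v w, fun w _ hw => g.sig_legal v w hw, ?_⟩
  intro p hp h0 hc
  suffices H : ∀ n w k, w ∈ g.attr n → p k = some w → g.Visits p from H n v 0 hv h0
  intro n
  induction n with
  | zero => intro w k hw hk; exact ⟨k, w, hk, hw⟩
  | succ n ih =>
    intro w k hw hk
    rcases hw with (hw' | ⟨hw0, u, hu, huA⟩) | ⟨hw0, hsucc, hall⟩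
    · exact ih w k hw' hk
    · by_cases hA : w ∈ g.attr n
      · exact ih w k hA hk
      · have hsucc : g.hasSucc w := ⟨u, hu⟩
        have hstep := hc k w hk hw0 hsucc
        have hcond : ∃ u', g.E w u' ∧ ∀ m, w ∈ g.attr (m + 1) → u' ∈ g.attr m := by
          refine ⟨u, hu, fun m hm => ?_⟩
          have hnm : n ≤ m := by
            by_contra h
            push_neg at h
            exact hA (g.attr_mono (Nat.succ_le_of_lt h) hm)
          exact g.attr_mono hnm huA
        have hsig : g.sig v w = hcond.choose := by unfold sig; rw [dif_pos hcond]
        have hmem : g.sig v w ∈ g.attr n := by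
          rw [hsig]
          exact hcond.choose_spec.2 n (Or.inl (Or.inr ⟨hw0, u, hu, huA⟩))
        exact ih _ (k + 1) hmem (by simpa using hstep)
    · obtain ⟨u, hu1⟩ := ((hp k).2 w hk).2.1 hsucc
      have hE := ((hp k).2 w hk).2.2 u hu1
      exact ih u (k + 1) (hall u hE) hu1

lemma win1_of_not_attr [Fintype V] (g : RGame V) {v : V} (hv : ∀ n, v ∉ g.attr n) :
    g.Win1From v := by
  classical
  refine ⟨fun w _ => g.tau v w, fun w _ hw => g.tau_legal v w hw, ?_⟩
  intro p hp h0 hc hvis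
  obtain ⟨k, w, hk, hwF⟩ := hvis
  have inv : ∀ k w, p k = some w → ∀ n, w ∉ g.attr n := by
    intro k
    induction k with
    | zero =>
      intro w hw
      rw [h0] at hw
      simp only [Option.some.injEq] at hw
      subst hw; exact hv
    | succ k ih =>
      intro w hw n
      cases hpk : p k with
      | none =>
        have := (hp k).1 hpk
        rw [hw] at this; simp at this
      | some x =>
        have hx := ih x hpk
        by_cases hx0 : x ∈ g.V0
        · have hE : g.E x w := ((hp k).2 x hpk).2.2 w hw
          intro hwA
          exact hx (n + 1) (Or.inl (Or.inr ⟨hx0, w, hE, hwA⟩))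
        · have hsucc : g.hasSucc x := by
            by_contra hns
            have := ((hp k).2 x hpk).1 hns
            rw [hw] at this; simp at this
          have hstep := hc k x hpk hx0 hsucc
          rw [hw] at hstep
          have hw' : w = g.tau v x := by simpa using hstep
          have hcond : ∃ u, g.E x u ∧ ∀ n, u ∉ g.attr n := by
            by_contra hno
            push_neg at hno
            set f : V → ℕ := fun u => if h : ∃ n, u ∈ g.attr n then Nat.find h else 0 with hf
            set N := Finset.univ.sup f with hN
            have hx' : x ∈ g.attr (N + 1) := by
              refine Or.inr ⟨hx0, hsucc, fun u hu => ?_⟩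
              obtain ⟨m, hm⟩ := hno u hu
              have hex : ∃ n, u ∈ g.attr n := ⟨m, hm⟩
              have h1 : u ∈ g.attr (f u) := by
                simp only [hf]
                rw [dif_pos hex]
                exact Nat.find_spec hex
              exact g.attr_mono (Finset.le_sup (Finset.mem_univ u)) h1
            exact hx (N + 1) hx'
          have : g.tau v x = hcond.choose := by unfold tau; rw [dif_pos hcond]
          rw [hw', this]
          exact hcond.choose_spec.2 n
  exact inv k w hk 0 hwF

open Classical in
/-- The play arising from pitting strategy `σ` (Player 0) against `τ` (Player 1). -/
noncomputable def run (g : RGame V) (σ τ : V → List V → V) (v : V) : ℕ → Option V × List V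
  | 0 => (some v, [v])
  | n + 1 =>
    let r := run g σ τ v n
    match r.1 with
    | none => (none, r.2)
    | some w =>
      if g.hasSucc w then
        (some (if w ∈ g.V0 then σ w r.2 else τ w r.2),
          r.2 ++ [if w ∈ g.V0 then σ w r.2 else τ w r.2])
      else (none, r.2)

lemma not_both (g : RGame V) (v : V) : ¬(g.Win0From v ∧ g.Win1From v) := by
  classical
  rintro ⟨⟨σ, hσ, hσw⟩, τ, hτ, hτw⟩
  set p : ℕ → Option V := fun n => (g.run σ τ v n).1 with hpdef
  have h0 : p 0 = some v := rfl
  have hist : ∀ n, (g.run σ τ v n).2 = histUpTo p n := by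
    intro n
    induction n with
    | zero =>
      simp [run, histUpTo, List.range_succ, hpdef]
    | succ n ih =>
      have hrange : histUpTo p (n + 1) = histUpTo p n ++ (p (n + 1)).toList := by
        cases h : p (n + 1) <;> cases h2 : p n <;>
          simp [histUpTo, List.range_succ, List.filterMap_append, List.filterMap_cons, h, h2]
      rw [hrange]
      cases hpn : p n with
      | none =>
        have h1 : g.run σ τ v (n + 1) = (none, (g.run σ τ v n).2) := by
          simp only [run]
          rw [show (g.run σ τ v n).1 = none from hpn]
        have h2 : p (n + 1) = none := by rw [hpdef]; simp [h1]
        rw [h1, h2, ih]; simp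
      | some w =>
        by_cases hs : g.hasSucc w
        · have h1 : g.run σ τ v (n + 1) =
              (some (if w ∈ g.V0 then σ w (g.run σ τ v n).2 else τ w (g.run σ τ v n).2),
               (g.run σ τ v n).2 ++ [if w ∈ g.V0 then σ w (g.run σ τ v n).2 else τ w (g.run σ τ v n).2]) := by
            simp only [run]
            rw [show (g.run σ τ v n).1 = some w from hpn]
            simp [hs]
          have h2 : p (n + 1) = some (if w ∈ g.V0 then σ w (g.run σ τ v n).2 else τ w (g.run σ τ v n).2) := by
            rw [hpdef]; simp [h1]
          rw [h1, h2, ih]; simp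
        · have h1 : g.run σ τ v (n + 1) = (none, (g.run σ τ v n).2) := by
            simp only [run]
            rw [show (g.run σ τ v n).1 = some w from hpn]
            simp [hs]
          have h2 : p (n + 1) = none := by rw [hpdef]; simp [h1]
          rw [h1, h2, ih]; simp
  have step_some : ∀ n w, p n = some w → g.hasSucc w →
      p (n + 1) = some (if w ∈ g.V0 then σ w (histUpTo p n) else τ w (histUpTo p n)) := by
    intro n w hpn hs
    have h1 : g.run σ τ v (n + 1) =
        (some (if w ∈ g.V0 then σ w (g.run σ τ v n).2 else τ w (g.run σ τ v n).2),
         (g.run σ τ v n).2 ++ [if w ∈ g.V0 then σ w (g.run σ τ v n).2 else τ w (g.run σ τ v n).2]) := by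
      simp only [run]
      rw [show (g.run σ τ v n).1 = some w from hpn]
      simp [hs]
    rw [hpdef]
    simp [h1, hist n]; rfl
  have step_none : ∀ n w, p n = some w → ¬g.hasSucc w → p (n + 1) = none := by
    intro n w hpn hs
    have h1 : g.run σ τ v (n + 1) = (none, (g.run σ τ v n).2) := by
      simp only [run]
      rw [show (g.run σ τ v n).1 = some w from hpn]
      simp [hs]
    rw [hpdef]; simp [h1]
  have none_step : ∀ n, p n = none → p (n + 1) = none := by
    intro n hpn
    have h1 : g.run σ τ v (n + 1) = (none, (g.run σ τ v n).2) := by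
      simp only [run]
      rw [show (g.run σ τ v n).1 = none from hpn]
    rw [hpdef]; simp [h1]
  have hplay : g.IsPlay p := by
    intro n
    refine ⟨none_step n, fun w hw => ⟨step_none n w hw, fun hs => ?_, fun u hu => ?_⟩⟩
    · exact ⟨_, step_some n w hw hs⟩
    · have hs : g.hasSucc w := by
        by_contra hns
        rw [step_none n w hw hns] at hu; simp at hu
      rw [step_some n w hw hs] at hu
      have : u = if w ∈ g.V0 then σ w (histUpTo p n) else τ w (histUpTo p n) :=
        (Option.some_inj.mp hu).symm
      subst this
      split
      · exact hσ w _ hs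
      · exact hτ w _ hs
  have hc0 : g.Cons0 σ p := by
    intro n w hw hw0 hs
    rw [step_some n w hw hs, if_pos hw0]
  have hc1 : g.Cons1 τ p := by
    intro n w hw hw0 hs
    rw [step_some n w hw hs, if_neg hw0]
  exact hτw p hplay h0 hc1 (hσw p hplay h0 hc0)

end RGame

/-- Positional determinacy of finite reachability games: every vertex
lies in exactly one of the two winning regions `W₀` and `W₁`. -/
theorem reachability_determinacy {V : Type*} [Fintype V] (g : RGame V) :
    ∀ v : V, Xor' (g.Win0From v) (g.Win1From v) := by

  intro v
  by_cases h : ∃ n, v ∈ g.attr n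
  · obtain ⟨n, hn⟩ := h
    exact Or.inl ⟨g.win0_of_attr hn, fun h1 => g.not_both v ⟨g.win0_of_attr hn, h1⟩⟩
  · push_neg at h
    exact Or.inr ⟨g.win1_of_not_attr h, fun h0 => g.not_both v ⟨h0, g.win1_of_not_attr h⟩⟩
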